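/- Under the same hypotheses, if ‖DF‖_∞ = L > 1, then the noisy dissipation time satisfies τ(ε) ≥ (β/ln L)·ln(1/ε) + c for some constant c and all sufficiently small ε. -/

import Mathlib

open MeasureTheory
open scoped NNReal ENNReal

noncomputable section

/-- The d-dimensional torus 𝕋^d. -/
abbrev Torus (d : ℕ) := Fin d → AddCircle (1 : ℝ)

/-- Under the same hypotheses, if `‖DF‖_∞ = L > 1` (F L-Lipschitz with L > 1), then
the noisy dissipation time satisfies `τ(ε) ≥ (β/ln L) ln(1/ε) + c` for some constant
c and all sufficiently small ε > 0. -/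
lemma lip_memL2 {d : ℕ} (h : Torus d → ℂ) (K : ℝ≥0) (hl : LipschitzWith K h) :
    MemLp h 2 (volume : Measure (Torus d)) := by
  obtain ⟨Cb, hCb⟩ := isCompact_univ.exists_bound_of_continuousOn hl.continuous.continuousOn
  exact MemLp.of_bound hl.continuous.aestronglyMeasurable Cb
    (Filter.Eventually.of_forall fun x => hCb x trivial)

lemma rev_tri {d : ℕ} (g₁ g₂ : Torus d → ℂ) (h1 : AEStronglyMeasurable g₁ (volume : Measure (Torus d)))
    (h2 : AEStronglyMeasurable g₂ volume) :
    eLpNorm g₁ 2 volume ≤ eLpNorm g₂ 2 volume + eLpNorm (fun x => g₂ x - g₁ x) 2 volume := by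
  have key := eLpNorm_add_le h2 (h1.sub h2) (by norm_num : (1:ℝ≥0∞) ≤ 2)
  have e : g₁ = fun x => g₂ x + (g₁ x - g₂ x) := by funext x; ring
  have comm : eLpNorm (fun x => g₁ x - g₂ x) 2 (volume : Measure (Torus d))
      = eLpNorm (fun x => g₂ x - g₁ x) 2 volume := by
    rw [← eLpNorm_neg]; congr 1; funext x; simp only [Pi.neg_apply]; ring
  calc eLpNorm g₁ 2 volume = eLpNorm (fun x => g₂ x + (g₁ x - g₂ x)) 2 volume := by rw [← e]
    _ ≤ eLpNorm g₂ 2 volume + eLpNorm (fun x => g₁ x - g₂ x) 2 volume := key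
    _ = _ := by rw [comm]

theorem stmt15 (d : ℕ) (F : Torus d → Torus d)
    (hF : MeasurePreserving F volume volume)
    (L : ℝ≥0) (hL : 1 < (L : ℝ)) (hFL : LipschitzWith L F)
    (G : ℝ → (Torus d → ℂ) → (Torus d → ℂ))
    (C β : ℝ) (hC : 0 < C) (hβ : 0 < β)
    (hGnoise : ∀ ε : ℝ, 0 < ε → ∀ (h : Torus d → ℂ) (K : ℝ≥0), LipschitzWith K h →
      (eLpNorm (fun x => G ε h x - h x) 2 volume).toReal ≤ C * ε ^ β * K)
    (hGlip : ∀ ε : ℝ, 0 < ε → ∀ (h : Torus d → ℂ) (K : ℝ≥0), LipschitzWith K h →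
      LipschitzWith K (G ε h))
    (f : Torus d → ℂ) (N : ℝ≥0) (hN : 0 < (N : ℝ)) (hfl : LipschitzWith N f)
    (hf0 : (∫ x, f x) = 0) (hfn : (eLpNorm f 2 volume).toReal = 1)
    (τ : ℝ → ℕ)
    (hτ : ∀ ε : ℝ, 0 < ε →
      (eLpNorm ((fun h => G ε (h ∘ F))^[τ ε] f) 2 volume).toReal < Real.exp (-1)) :
    ∃ c ε₀ : ℝ, 0 < ε₀ ∧ ∀ ε : ℝ, 0 < ε → ε < ε₀ →
      (β / Real.log L) * Real.log (1 / ε) + c ≤ τ ε := by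
  have hlogL : 0 < Real.log L := Real.log_pos hL
  set A : ℝ := Real.log ((L:ℝ) - 1) - Real.log (2 * C * N) with hA
  refine ⟨A / Real.log L - 1, 1, one_pos, fun ε hε _ => ?_⟩
  set T : (Torus d → ℂ) → (Torus d → ℂ) := fun h => G ε (h ∘ F) with hT
  -- Lipschitz bound on iterates
  have lip : ∀ n : ℕ, LipschitzWith (N * L ^ n) (T^[n] f) := by
    intro n
    induction n with
    | zero => simpa using hfl
    | succ n ih =>
      rw [Function.iterate_succ_apply']
      have h1 : LipschitzWith ((N * L ^ n) * L) (T^[n] f ∘ F) := ih.comp hFL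
      have h2 := hGlip ε hε (T^[n] f ∘ F) ((N * L ^ n) * L) h1
      have : (N * L ^ n) * L = N * L ^ (n + 1) := by ring
      rw [← this]; exact h2
  -- lower bound on norms
  have lower : ∀ n : ℕ,
      1 - C * ε ^ β * ((N:ℝ) * ∑ k ∈ Finset.range n, (L:ℝ) ^ (k + 1))
        ≤ (eLpNorm (T^[n] f) 2 volume).toReal := by
    intro n
    induction n with
    | zero => simpa using hfn.ge
    | succ n ih =>
      set g := T^[n] f with hg
      have hliph : LipschitzWith ((N * L ^ n) * L) (g ∘ F) := (lip n).comp hFL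
      have hlipG := hGlip ε hε (g ∘ F) _ hliph
      have m1 : MemLp (g ∘ F) 2 (volume : Measure (Torus d)) := lip_memL2 _ _ hliph
      have m2 : MemLp (G ε (g ∘ F)) 2 (volume : Measure (Torus d)) := lip_memL2 _ _ hlipG
      have mdiff : MemLp (fun x => G ε (g ∘ F) x - (g ∘ F) x) 2 (volume : Measure (Torus d)) :=
        m2.sub m1
      have tri := rev_tri (g ∘ F) (G ε (g ∘ F)) m1.aestronglyMeasurable m2.aestronglyMeasurable
      have tri' : (eLpNorm (g ∘ F) 2 volume).toReal
          ≤ (eLpNorm (G ε (g ∘ F)) 2 volume).toReal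
            + (eLpNorm (fun x => G ε (g ∘ F) x - (g ∘ F) x) 2 volume).toReal := by
        rw [← ENNReal.toReal_add m2.eLpNorm_ne_top mdiff.eLpNorm_ne_top]
        exact ENNReal.toReal_mono (by
          exact ENNReal.add_ne_top.mpr ⟨m2.eLpNorm_ne_top, mdiff.eLpNorm_ne_top⟩) tri
      have hcomp : eLpNorm (g ∘ F) 2 volume = eLpNorm g 2 volume :=
        eLpNorm_comp_measurePreserving (lip_memL2 _ _ (lip n)).aestronglyMeasurable hF
      have hnoise := hGnoise ε hε (g ∘ F) _ hliph
      have hiter : T^[n+1] f = G ε (g ∘ F) := by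
        rw [Function.iterate_succ_apply']
      have hKcast : (((N * L ^ n) * L : ℝ≥0) : ℝ) = (N:ℝ) * (L:ℝ) ^ (n + 1) := by
        push_cast; ring
      rw [hiter]
      have step : (eLpNorm g 2 volume).toReal - C * ε ^ β * ((N:ℝ) * (L:ℝ) ^ (n + 1))
          ≤ (eLpNorm (G ε (g ∘ F)) 2 volume).toReal := by
        rw [← hcomp]
        have := hnoise
        rw [hKcast] at this
        linarith [tri']
      have sum_succ : ∑ k ∈ Finset.range (n + 1), (L:ℝ) ^ (k + 1)
          = (∑ k ∈ Finset.range n, (L:ℝ) ^ (k + 1)) + (L:ℝ) ^ (n + 1) :=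
        Finset.sum_range_succ _ _
      rw [sum_succ]
      have : 1 - C * ε ^ β * ((N:ℝ) * ((∑ k ∈ Finset.range n, (L:ℝ) ^ (k + 1)) + (L:ℝ) ^ (n+1)))
          = (1 - C * ε ^ β * ((N:ℝ) * ∑ k ∈ Finset.range n, (L:ℝ) ^ (k + 1)))
            - C * ε ^ β * ((N:ℝ) * (L:ℝ) ^ (n + 1)) := by ring
      rw [this]
      linarith [ih, step]
  -- apply at n = τ ε
  set n := τ ε with hn
  have hεβ : (0:ℝ) < ε ^ β := Real.rpow_pos_of_pos hε β
  have hRL1 : (0:ℝ) < (L:ℝ) - 1 := by linarith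
  have hexp : Real.exp (-1) < 1/2 := by
    rw [Real.exp_neg]
    rw [inv_lt_comm₀ (Real.exp_pos 1) (by norm_num)]
    calc (1/2 : ℝ)⁻¹ = 2 := by norm_num
      _ < Real.exp 1 := by linarith [Real.add_one_lt_exp (by norm_num : (1:ℝ) ≠ 0)]
  have hSb : (∑ k ∈ Finset.range n, (L:ℝ) ^ (k + 1)) ≤ (L:ℝ) ^ (n + 1) / ((L:ℝ) - 1) := by
    have hgeom : ∑ k ∈ Finset.range n, (L:ℝ) ^ k = ((L:ℝ) ^ n - 1) / ((L:ℝ) - 1) :=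
      geom_sum_eq (by linarith) n
    have : ∑ k ∈ Finset.range n, (L:ℝ) ^ (k + 1) = (L:ℝ) * ∑ k ∈ Finset.range n, (L:ℝ) ^ k := by
      rw [Finset.mul_sum]; congr 1; funext k; ring
    rw [this, hgeom]
    have e2 : (L:ℝ) * (((L:ℝ) ^ n - 1) / ((L:ℝ) - 1)) = ((L:ℝ) ^ (n+1) - (L:ℝ)) / ((L:ℝ) - 1) := by
      field_simp; ring
    rw [e2]
    have hL0 : (0:ℝ) < (L:ℝ) := by linarith
    gcongr <;> linarith
  have half : 1/2 < C * ε ^ β * ((N:ℝ) * ∑ k ∈ Finset.range n, (L:ℝ) ^ (k + 1)) := by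
    have h1 := lower n
    have h2 := hτ ε hε
    rw [← hn] at h2
    linarith
  have hP : (0:ℝ) < C * ε ^ β * (N:ℝ) := by positivity
  have hLkey : ((L:ℝ) - 1) / (2 * C * (N:ℝ) * ε ^ β) < (L:ℝ) ^ (n + 1) := by
    rw [div_lt_iff₀ (by positivity)]
    have := mul_le_mul_of_nonneg_left hSb (le_of_lt hP)
    have h3 : 1/2 < C * ε ^ β * (N:ℝ) * ((L:ℝ) ^ (n + 1) / ((L:ℝ) - 1)) := by
      calc (1:ℝ)/2 < C * ε ^ β * ((N:ℝ) * ∑ k ∈ Finset.range n, (L:ℝ) ^ (k + 1)) := half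
        _ = C * ε ^ β * (N:ℝ) * (∑ k ∈ Finset.range n, (L:ℝ) ^ (k + 1)) := by ring
        _ ≤ _ := this
    rw [← mul_div_assoc, lt_div_iff₀ hRL1] at h3
    nlinarith [h3]
  -- take logs
  have hpos : (0:ℝ) < ((L:ℝ) - 1) / (2 * C * (N:ℝ) * ε ^ β) := by positivity
  have hlog := Real.log_lt_log hpos hLkey
  rw [Real.log_pow] at hlog
  have hlogdiv : Real.log (((L:ℝ) - 1) / (2 * C * (N:ℝ) * ε ^ β))
      = A + β * Real.log (1 / ε) := by
    rw [Real.log_div (by linarith) (by positivity)]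
    have : (2 * C * (N:ℝ) * ε ^ β) = (2 * C * (N:ℝ)) * ε ^ β := by ring
    rw [this, Real.log_mul (by positivity) (by positivity), Real.log_rpow hε,
      Real.log_div one_ne_zero (ne_of_gt hε), Real.log_one, hA]
    ring
  rw [hlogdiv] at hlog
  -- conclude
  have key : A + β * Real.log (1 / ε) < ((n:ℝ) + 1) * Real.log L := by
    push_cast at hlog ⊢
    linarith
  have h1 : (A + β * Real.log (1 / ε)) / Real.log L < (n:ℝ) + 1 :=
    (div_lt_iff₀ hlogL).mpr key
  have h2 : (β / Real.log L) * Real.log (1 / ε) + (A / Real.log L - 1)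
      = (A + β * Real.log (1 / ε)) / Real.log L - 1 := by
    field_simp
    ring
  rw [h2]
  linarith
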